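/- arXiv:2009.00396 — 2 statements merged into one kernel-verified Lean document; each statement's English description precedes it below -/
import Mathlib

section
/- Let M be a spectral space and B a commutative ring. Then the B-module Cons(M, B) of B-valued constructible functions on M is generated by the indicator functions of closed constructible subsets of M. -/
/-- A spectral space: quasi-compact, quasi-separated, sober, and the
quasi-compact open subsets form a basis of the topology. -/
def SpectralSpaceDef (X : Type*) [TopologicalSpace X] : Prop :=
  CompactSpace X ∧ QuasiSeparatedSpace X ∧ QuasiSober X ∧ T0Space X ∧
    TopologicalSpace.IsTopologicalBasis {U : Set X | IsOpen U ∧ IsCompact U}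

/-- The constructible subsets: the smallest class of subsets containing the
quasi-compact open subsets and stable under complements and finite unions
(hence also finite intersections). -/
inductive IsConstr {X : Type*} [TopologicalSpace X] : Set X → Prop
  | qcOpen : ∀ U : Set X, IsOpen U → IsCompact U → IsConstr U
  | compl : ∀ A : Set X, IsConstr A → IsConstr Aᶜ
  | union : ∀ A B : Set X, IsConstr A → IsConstr B → IsConstr (A ∪ B)

/-- A constructible function: there is a finite partition of the space into
locally closed constructible subsets on each of which the function is constant. -/
def IsConsFun {X : Type*} [TopologicalSpace X] {B : Type*} (φ : X → B) : Prop :=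
  ∃ (n : ℕ) (P : Fin n → Set X),
    (∀ i, IsLocallyClosed (P i) ∧ IsConstr (P i)) ∧
    (∀ x, ∃! i, x ∈ P i) ∧
    ∀ i, ∀ x ∈ P i, ∀ y ∈ P i, φ x = φ y

section Aux

variable {X : Type*} [TopologicalSpace X]

lemma IsConstr.inter' {A B : Set X} (hA : IsConstr A) (hB : IsConstr B) :
    IsConstr (A ∩ B) := by
  have h := IsConstr.compl _ (IsConstr.union _ _ (IsConstr.compl _ hA) (IsConstr.compl _ hB))
  simpa [Set.compl_union] using h

lemma isConstr_univ : IsConstr (Set.univ : Set X) := by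
  simpa using IsConstr.compl _ (IsConstr.qcOpen ∅ isOpen_empty isCompact_empty)

/-- `IsConsFun` is closed under pointwise binary operations. -/
lemma IsConsFun.map2 {B C : Type*} {φ ψ : X → B} (op : B → B → C)
    (hφ : IsConsFun φ) (hψ : IsConsFun ψ) : IsConsFun (fun x => op (φ x) (ψ x)) := by
  obtain ⟨n, P, hP, hu, hc⟩ := hφ
  obtain ⟨m, Q, hQ, hu', hc'⟩ := hψ
  refine ⟨n * m, fun k => P (finProdFinEquiv.symm k).1 ∩ Q (finProdFinEquiv.symm k).2,
    fun k => ⟨(hP _).1.inter (hQ _).1, (hP _).2.inter' (hQ _).2⟩, ?_, ?_⟩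
  · intro x
    obtain ⟨i, hi, hiu⟩ := hu x
    obtain ⟨j, hj, hju⟩ := hu' x
    refine ⟨finProdFinEquiv (i, j), ?_, ?_⟩
    · simp only [Equiv.symm_apply_apply]
      exact ⟨hi, hj⟩
    · intro k hk
      have h1 : (finProdFinEquiv.symm k).1 = i := hiu _ hk.1
      have h2 : (finProdFinEquiv.symm k).2 = j := hju _ hk.2
      rw [← Equiv.apply_symm_apply finProdFinEquiv k]
      rw [show finProdFinEquiv.symm k = (i, j) from Prod.ext h1 h2]
  · intro k x hx y hy
    show op (φ x) (ψ x) = op (φ y) (ψ y)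
    rw [hc _ _ hx.1 _ hy.1, hc' _ _ hx.2 _ hy.2]

end Aux

section Span

variable {M : Type*} [TopologicalSpace M] {B : Type*} [CommRing B]

/-- The generating set: indicator functions of closed constructible subsets. -/
def GenS (M : Type*) [TopologicalSpace M] (B : Type*) [CommRing B] : Set (M → B) :=
  {f : M → B | ∃ Z : Set M, IsClosed Z ∧ IsConstr Z ∧
    f = Set.indicator Z (fun _ => (1 : B))}

lemma mul_mem_span_gen {f g : M → B}
    (hf : f ∈ Submodule.span B (GenS M B)) (hg : g ∈ Submodule.span B (GenS M B)) :
    f * g ∈ Submodule.span B (GenS M B) := by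
  induction hf using Submodule.span_induction with
  | mem f hfS =>
    induction hg using Submodule.span_induction with
    | mem g hgS =>
      obtain ⟨Z1, hZ1c, hZ1, rfl⟩ := hfS
      obtain ⟨Z2, hZ2c, hZ2, rfl⟩ := hgS
      apply Submodule.subset_span
      refine ⟨Z1 ∩ Z2, hZ1c.inter hZ2c, hZ1.inter' hZ2, ?_⟩
      funext x
      by_cases h1 : x ∈ Z1 <;> by_cases h2 : x ∈ Z2 <;>
        simp [Set.indicator_apply, h1, h2]
    | zero => simpa using Submodule.zero_mem _
    | add g1 g2 _ _ ih1 ih2 => rw [mul_add]; exact Submodule.add_mem _ ih1 ih2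
    | smul c g _ ih => rw [mul_smul_comm]; exact Submodule.smul_mem _ _ ih
  | zero => simpa using Submodule.zero_mem _
  | add f1 f2 _ _ ih1 ih2 => rw [add_mul]; exact Submodule.add_mem _ ih1 ih2
  | smul c f _ ih => rw [smul_mul_assoc]; exact Submodule.smul_mem _ _ ih

lemma one_mem_span_gen : (1 : M → B) ∈ Submodule.span B (GenS M B) := by
  apply Submodule.subset_span
  exact ⟨Set.univ, isClosed_univ, isConstr_univ, by simp; rfl⟩

lemma indicator_mem_span_gen {A : Set M} (hA : IsConstr A) :
    Set.indicator A (fun _ => (1 : B)) ∈ Submodule.span B (GenS M B) := by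
  induction hA with
  | qcOpen U hU hc =>
    have heq : Set.indicator U (fun _ => (1 : B)) =
        1 - Set.indicator Uᶜ (fun _ => (1 : B)) := by
      funext x; by_cases h : x ∈ U <;> simp [Set.indicator_apply, h]
    rw [heq]
    exact Submodule.sub_mem _ one_mem_span_gen
      (Submodule.subset_span ⟨Uᶜ, isClosed_compl_iff.mpr hU, IsConstr.compl _
        (IsConstr.qcOpen U hU hc), rfl⟩)
  | compl A hA ih =>
    have heq : Set.indicator Aᶜ (fun _ => (1 : B)) =
        1 - Set.indicator A (fun _ => (1 : B)) := by
      funext x; by_cases h : x ∈ A <;> simp [Set.indicator_apply, h]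
    rw [heq]
    exact Submodule.sub_mem _ one_mem_span_gen ih
  | union A C hA hC ihA ihC =>
    have heq : Set.indicator (A ∪ C) (fun _ => (1 : B)) =
        Set.indicator A (fun _ => (1 : B)) + Set.indicator C (fun _ => (1 : B)) -
          Set.indicator A (fun _ => (1 : B)) * Set.indicator C (fun _ => (1 : B)) := by
      funext x
      by_cases h1 : x ∈ A <;> by_cases h2 : x ∈ C <;>
        simp [Set.indicator_apply, h1, h2]
    rw [heq]
    exact Submodule.sub_mem _ (Submodule.add_mem _ ihA ihC) (mul_mem_span_gen ihA ihC)

end Span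

/-- The `B`-module of `B`-valued constructible functions on a spectral space is generated
by the indicator functions of closed constructible subsets. -/
theorem consFun_span_indicators
    {M : Type*} [TopologicalSpace M] (hM : SpectralSpaceDef M) (B : Type*) [CommRing B] :
    (Submodule.span B
        {f : M → B | ∃ Z : Set M, IsClosed Z ∧ IsConstr Z ∧
          f = Set.indicator Z (fun _ => (1 : B))} : Set (M → B)) =
      {φ : M → B | IsConsFun φ} := by
  classical
  have hgen : {f : M → B | ∃ Z : Set M, IsClosed Z ∧ IsConstr Z ∧
      f = Set.indicator Z (fun _ => (1 : B))} = GenS M B := rfl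
  rw [hgen]
  ext φ
  simp only [SetLike.mem_coe, Set.mem_setOf_eq]
  constructor
  · -- span ⊆ constructible functions
    intro hφ
    induction hφ using Submodule.span_induction with
    | mem f hfS =>
      obtain ⟨Z, hZc, hZ, rfl⟩ := hfS
      refine ⟨2, ![Z, Zᶜ], ?_, ?_, ?_⟩
      · intro i
        fin_cases i
        · exact ⟨hZc.isLocallyClosed, hZ⟩
        · exact ⟨hZc.isOpen_compl.isLocallyClosed, IsConstr.compl _ hZ⟩
      · intro x
        by_cases h : x ∈ Z
        · refine ⟨0, h, fun i hi => ?_⟩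
          fin_cases i
          · rfl
          · simp_all
        · refine ⟨1, h, fun i hi => ?_⟩
          fin_cases i
          · simp_all
          · rfl
      · intro i x hx y hy
        fin_cases i <;> simp_all [Set.indicator_apply]
    | zero =>
      exact ⟨1, fun _ => Set.univ, fun _ => ⟨isOpen_univ.isLocallyClosed, isConstr_univ⟩,
        fun x => ⟨0, trivial, fun i _ => Subsingleton.elim i 0⟩, fun _ _ _ _ _ => rfl⟩
    | add f g _ _ ihf ihg => exact IsConsFun.map2 (· + ·) ihf ihg
    | smul c f _ ih =>
      obtain ⟨n, P, hP, hu, hc⟩ := ih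
      exact ⟨n, P, hP, hu, fun i x hx y hy => by
        simp only [Pi.smul_apply, smul_eq_mul, hc i x hx y hy]⟩
  · -- constructible functions ⊆ span
    rintro ⟨n, P, hP, hu, hc⟩
    have key : φ = ∑ i, (if h : (P i).Nonempty then φ h.choose else 0) •
        Set.indicator (P i) (fun _ => (1 : B)) := by
      funext x
      obtain ⟨i0, hi0, hiu⟩ := hu x
      rw [Finset.sum_apply]
      rw [Finset.sum_eq_single i0]
      · have hne : (P i0).Nonempty := ⟨x, hi0⟩
        rw [dif_pos hne]
        simp only [Pi.smul_apply, smul_eq_mul, Set.indicator_apply, hi0, if_pos, mul_one]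
        exact (hc i0 _ hne.choose_spec x hi0).symm
      · intro i _ hi
        have hx : x ∉ P i := fun h => hi (hiu i h)
        simp [Set.indicator_apply, hx]
      · intro h; exact absurd (Finset.mem_univ i0) h
    rw [key]
    exact Submodule.sum_mem _ fun i _ =>
      Submodule.smul_mem _ _ (indicator_mem_span_gen (hP i).2)
end

section
/- Let M be a spectral space, B a commutative ring, and let φ : M → B be a constructible function. Then there exist finitely many closed constructible subsets Z₁, …, Zₙ ⊆ M and elements b₁, …, bₙ ∈ B such that φ = Σᵢ bᵢ · 1_{Zᵢ}, where 1_{Zᵢ} is the indicator function of Zᵢ. -/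
/-- A spectral space: quasi-compact, quasi-separated, sober, and the
quasi-compact open subsets form a basis of the topology. -/
def SpectralSpace' (X : Type*) [TopologicalSpace X] : Prop :=
  CompactSpace X ∧ QuasiSeparatedSpace X ∧ QuasiSober X ∧ T0Space X ∧
    TopologicalSpace.IsTopologicalBasis {U : Set X | IsOpen U ∧ IsCompact U}

/-- Functions expressible as finite sums of constant multiples of indicator
functions of closed constructible subsets. -/
def InS {M : Type*} [TopologicalSpace M] {B : Type*} [CommRing B] (f : M → B) : Prop :=
  ∃ (n : ℕ) (Z : Fin n → Set M) (b : Fin n → B),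
    (∀ i, IsClosed (Z i) ∧ IsConstr (Z i)) ∧
    f = fun x => ∑ i, Set.indicator (Z i) (fun _ => b i) x

section
variable {M : Type*} [TopologicalSpace M] {B : Type*} [CommRing B]

lemma InS_zero : InS (fun _ : M => (0 : B)) :=
  ⟨0, Fin.elim0, Fin.elim0, fun i => i.elim0, by simp⟩

lemma InS_add {f g : M → B} (hf : InS f) (hg : InS g) : InS (fun x => f x + g x) := by
  obtain ⟨n, Z, b, hZ, rfl⟩ := hf
  obtain ⟨m, W, c, hW, rfl⟩ := hg
  refine ⟨n + m, Fin.append Z W, Fin.append b c, ?_, ?_⟩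
  · intro i
    rcases lt_or_ge (i : ℕ) n with h | h
    · have : i = Fin.castAdd m ⟨i, h⟩ := by ext; simp
      rw [this, Fin.append_left]; exact hZ _
    · have : i = Fin.natAdd n ⟨(i : ℕ) - n, by omega⟩ := by ext; simp; omega
      rw [this, Fin.append_right]; exact hW _
  · funext x
    rw [Fin.sum_univ_add]
    simp [Fin.append_left, Fin.append_right]

lemma InS_neg {f : M → B} (hf : InS f) : InS (fun x => -f x) := by
  obtain ⟨n, Z, b, hZ, rfl⟩ := hf
  refine ⟨n, Z, fun i => -b i, hZ, ?_⟩
  funext x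
  rw [← Finset.sum_neg_distrib]
  refine Finset.sum_congr rfl fun i _ => ?_
  by_cases hx : x ∈ Z i <;> simp [Set.indicator, hx]

lemma InS_mul {f g : M → B} (hf : InS f) (hg : InS g) : InS (fun x => f x * g x) := by
  obtain ⟨n, Z, b, hZ, rfl⟩ := hf
  obtain ⟨m, W, c, hW, rfl⟩ := hg
  refine ⟨n * m, fun k => Z (finProdFinEquiv.symm k).1 ∩ W (finProdFinEquiv.symm k).2,
    fun k => b (finProdFinEquiv.symm k).1 * c (finProdFinEquiv.symm k).2, ?_, ?_⟩
  · intro k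
    refine ⟨(hZ _).1.inter (hW _).1, ?_⟩
    show IsConstr (Z (finProdFinEquiv.symm k).1 ∩ W (finProdFinEquiv.symm k).2)
    have h1 := (hZ (finProdFinEquiv.symm k).1).2
    have h2 := (hW (finProdFinEquiv.symm k).2).2
    have : Z (finProdFinEquiv.symm k).1 ∩ W (finProdFinEquiv.symm k).2 =
        ((Z (finProdFinEquiv.symm k).1)ᶜ ∪ (W (finProdFinEquiv.symm k).2)ᶜ)ᶜ := by
      simp [Set.compl_union]
    rw [this]
    exact IsConstr.compl _ (IsConstr.union _ _ (IsConstr.compl _ h1) (IsConstr.compl _ h2))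
  · funext x
    rw [Finset.sum_mul_sum]
    rw [← finProdFinEquiv.sum_comp (M := B)]
    rw [Fintype.sum_prod_type]
    refine Finset.sum_congr rfl fun i _ => Finset.sum_congr rfl fun j _ => ?_
    simp only [Equiv.symm_apply_apply]
    by_cases h1 : x ∈ Z i <;> by_cases h2 : x ∈ W j <;>
      simp [Set.indicator, h1, h2]

lemma IsConstr.univ : IsConstr (Set.univ : Set M) := by
  have := IsConstr.compl (∅ : Set M) (IsConstr.qcOpen ∅ isOpen_empty isCompact_empty)
  simpa using this

lemma InS_one : InS (fun _ : M => (1 : B)) :=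
  ⟨1, fun _ => Set.univ, fun _ => 1, fun _ => ⟨isClosed_univ, IsConstr.univ⟩, by simp⟩

lemma InS_indicator_of_constr {A : Set M} (hA : IsConstr A) :
    InS (A.indicator (fun _ => (1 : B))) := by
  induction hA with
  | qcOpen U hU hc =>
      have : U.indicator (fun _ => (1 : B)) =
          fun x => 1 + - Uᶜ.indicator (fun _ => (1 : B)) x := by
        funext x
        by_cases hx : x ∈ U <;> simp [Set.indicator, hx]
      rw [this]
      exact InS_add InS_one (InS_neg ⟨1, fun _ => Uᶜ, fun _ => 1,
        fun _ => ⟨hU.isClosed_compl, IsConstr.compl _ (IsConstr.qcOpen _ hU hc)⟩, by simp⟩)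
  | compl A hA ih =>
      have : Aᶜ.indicator (fun _ => (1 : B)) =
          fun x => 1 + - A.indicator (fun _ => (1 : B)) x := by
        funext x
        by_cases hx : x ∈ A <;> simp [Set.indicator, hx]
      rw [this]
      exact InS_add InS_one (InS_neg ih)
  | union A C hA hC ihA ihC =>
      have : (A ∪ C).indicator (fun _ => (1 : B)) =
          fun x => (A.indicator (fun _ => (1 : B)) x + C.indicator (fun _ => (1 : B)) x) +
            - (A.indicator (fun _ => (1 : B)) x * C.indicator (fun _ => (1 : B)) x) := by
        funext x
        by_cases h1 : x ∈ A <;> by_cases h2 : x ∈ C <;>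
          simp [Set.indicator, h1, h2]
      rw [this]
      exact InS_add (InS_add ihA ihC) (InS_neg (InS_mul ihA ihC))

lemma InS_const_mul {f : M → B} (b : B) (hf : InS f) : InS (fun x => b * f x) := by
  obtain ⟨n, Z, c, hZ, rfl⟩ := hf
  refine ⟨n, Z, fun i => b * c i, hZ, ?_⟩
  funext x
  rw [Finset.mul_sum]
  refine Finset.sum_congr rfl fun i _ => ?_
  by_cases hx : x ∈ Z i <;> simp [Set.indicator, hx]

lemma InS_sum {n : ℕ} {f : Fin n → M → B} (hf : ∀ i, InS (f i)) :
    InS (fun x => ∑ i, f i x) := by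
  induction n with
  | zero => simpa using InS_zero
  | succ n ih =>
      have : (fun x => ∑ i : Fin (n + 1), f i x) =
          fun x => (∑ i : Fin n, f i.castSucc x) + f (Fin.last n) x := by
        funext x; rw [Fin.sum_univ_castSucc]
      rw [this]
      exact InS_add (ih fun i => hf i.castSucc) (hf (Fin.last n))

end

/-- Every `B`-valued constructible function on a spectral space is a finite sum
`Σᵢ bᵢ · 1_{Zᵢ}` of multiples of indicator functions of closed constructible subsets. -/
theorem consFun_eq_sum_indicators
    {M : Type*} [TopologicalSpace M] (hM : SpectralSpace' M) {B : Type*} [CommRing B]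
    (φ : M → B) (hφ : IsConsFun φ) :
    ∃ (n : ℕ) (Z : Fin n → Set M) (b : Fin n → B),
      (∀ i, IsClosed (Z i) ∧ IsConstr (Z i)) ∧
      φ = fun x => ∑ i, Set.indicator (Z i) (fun _ => b i) x := by
  classical
  obtain ⟨n, P, hP, hpart, hconst⟩ := hφ
  have hb : ∀ i : Fin n, ∃ c : B, ∀ x ∈ P i, φ x = c := by
    intro i
    by_cases h : (P i).Nonempty
    · exact ⟨φ h.choose, fun x hx => hconst i x hx _ h.choose_spec⟩
    · exact ⟨0, fun x hx => absurd ⟨x, hx⟩ h⟩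
  choose b hbspec using hb
  have key : φ = fun x => ∑ i, (P i).indicator (fun _ => b i) x := by
    funext x
    obtain ⟨i₀, hi₀, huniq⟩ := hpart x
    rw [Finset.sum_eq_single i₀]
    · rw [Set.indicator_of_mem hi₀]
      exact hbspec i₀ x hi₀
    · intro j _ hj
      exact Set.indicator_of_notMem (fun hx => hj (huniq j hx)) _
    · intro h
      exact absurd (Finset.mem_univ i₀) h
  have hInS : InS φ := by
    rw [key]
    refine InS_sum fun i => ?_
    have h1 : InS (fun x => b i * (P i).indicator (fun _ => (1 : B)) x) :=
      InS_const_mul (b i) (InS_indicator_of_constr (hP i).2)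
    have h2 : ((P i).indicator fun _ => b i) =
        fun x => b i * (P i).indicator (fun _ => (1 : B)) x := by
      funext x
      by_cases hx : x ∈ P i <;> simp [Set.indicator, hx]
    rw [h2]
    exact h1
  exact hInS
end
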